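/- Let R be a ring with a ℤ-grading 𝒜 making it a graded ring, and let M, N be graded R-modules (with gradings ℳ, 𝒩) with M finitely generated as an R-module. Then every R-linear map f : M → N is a finite sum of homogeneous maps: there exist a finite set S ⊆ ℤ and R-linear maps f_s : M → N for s ∈ S, each homogeneous of degree s (i.e., f_s(ℳ(i)) ⊆ 𝒩(i+s) for all i ∈ ℤ), such that f = Σ_{s∈S} f_s. -/

import Mathlib

open DirectSum
open scoped Classical

set_option synthInstance.maxHeartbeats 400000
set_option maxHeartbeats 1000000

section aux
variable {R : Type*} [Ring R] (𝒜 : ℤ → AddSubgroup R) [GradedRing 𝒜]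
variable {M N : Type*} [AddCommGroup M] [Module R M] [AddCommGroup N] [Module R N]
variable (ℳ : ℤ → AddSubgroup M) [SetLike.GradedSMul 𝒜 ℳ] [DirectSum.Decomposition ℳ]
variable (𝒩 : ℤ → AddSubgroup N) [SetLike.GradedSMul 𝒜 𝒩] [DirectSum.Decomposition 𝒩]

/-- Projection onto degree `j` component of `N`. -/
noncomputable def projAux (j : ℤ) : N →+ N :=
  AddMonoidHom.mk' (fun n => (DirectSum.decompose 𝒩 n j : N)) (by
    intro a b
    simp only [DirectSum.decompose_add, DirectSum.add_apply, AddSubgroup.coe_add])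

lemma projAux_apply (j : ℤ) (n : N) : projAux 𝒩 j n = (DirectSum.decompose 𝒩 n j : N) := rfl

lemma projAux_mem (j : ℤ) (n : N) : projAux 𝒩 j n ∈ 𝒩 j := (DirectSum.decompose 𝒩 n j).2

lemma projAux_of_mem_same {j : ℤ} {n : N} (h : n ∈ 𝒩 j) : projAux 𝒩 j n = n :=
  DirectSum.decompose_of_mem_same 𝒩 h

lemma projAux_of_mem_ne {c j : ℤ} {n : N} (h : n ∈ 𝒩 c) (hne : c ≠ j) : projAux 𝒩 j n = 0 :=
  DirectSum.decompose_of_mem_ne 𝒩 h hne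

lemma projAux_smul {a : ℤ} {r : R} (hr : r ∈ 𝒜 a) (j : ℤ) (n : N) :
    projAux 𝒩 (a + j) (r • n) = r • projAux 𝒩 j n := by
  induction n using DirectSum.Decomposition.inductionOn 𝒩 with
  | zero => simp
  | @homogeneous c n =>
    have hmem : r • (n : N) ∈ 𝒩 (a + c) := SetLike.GradedSMul.smul_mem hr n.2
    rcases eq_or_ne j c with rfl | hne
    · rw [projAux_of_mem_same 𝒩 hmem, projAux_of_mem_same 𝒩 n.2]
    · rw [projAux_of_mem_ne 𝒩 hmem (by omega), projAux_of_mem_ne 𝒩 n.2 (Ne.symm hne), smul_zero]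
  | add n n' h h' => rw [smul_add, map_add, map_add, h, h', smul_add]

end aux

section aux2
variable {R : Type*} [Ring R] {𝒜 : ℤ → AddSubgroup R} [GradedRing 𝒜]
variable {M N : Type*} [AddCommGroup M] [Module R M] [AddCommGroup N] [Module R N]
variable (ℳ : ℤ → AddSubgroup M) [SetLike.GradedSMul 𝒜 ℳ] [DirectSum.Decomposition ℳ]
variable (𝒩 : ℤ → AddSubgroup N) [SetLike.GradedSMul 𝒜 𝒩] [DirectSum.Decomposition 𝒩]

/-- The degree-`s` homogeneous component of a linear map, as an additive map. -/
noncomputable def gAux (f : M →ₗ[R] N) (s : ℤ) : M →+ N :=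
  (DirectSum.toAddMonoid
      (fun i => (projAux 𝒩 (i + s)).comp (f.toAddMonoidHom.comp (ℳ i).subtype))).comp
    (DirectSum.decomposeAddEquiv ℳ).toAddMonoidHom

lemma gAux_of_mem {f : M →ₗ[R] N} {s i : ℤ} {m : M} (hm : m ∈ ℳ i) :
    gAux ℳ 𝒩 f s m = projAux 𝒩 (i + s) (f m) := by
  have : DirectSum.decomposeAddEquiv ℳ m = DirectSum.of (fun i => ℳ i) i ⟨m, hm⟩ :=
    DirectSum.decompose_of_mem ℳ hm
  simp only [gAux, AddMonoidHom.comp_apply, AddEquiv.coe_toAddMonoidHom, this,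
    DirectSum.toAddMonoid_of]
  rfl

lemma gAux_apply (f : M →ₗ[R] N) (s : ℤ) (m : M) :
    gAux ℳ 𝒩 f s m = ∑ i ∈ (DirectSum.decompose ℳ m).support,
      projAux 𝒩 (i + s) (f (DirectSum.decompose ℳ m i : M)) := by
  conv_lhs => rw [show m = ∑ i ∈ (DirectSum.decompose ℳ m).support,
    (DirectSum.decompose ℳ m i : M) from (DirectSum.sum_support_decompose ℳ m).symm]
  rw [map_sum]
  exact Finset.sum_congr rfl fun i hi => gAux_of_mem ℳ 𝒩 (DirectSum.decompose ℳ m i).2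

include 𝒜 in
lemma gAux_smul (f : M →ₗ[R] N) (s : ℤ) (r : R) (m : M) :
    gAux ℳ 𝒩 f s (r • m) = r • gAux ℳ 𝒩 f s m := by
  induction r using DirectSum.Decomposition.inductionOn 𝒜 with
  | zero => simp
  | @homogeneous a r =>
    induction m using DirectSum.Decomposition.inductionOn ℳ with
    | zero => simp
    | @homogeneous b m =>
      have hmem : (r : R) • (m : M) ∈ ℳ (a + b) := SetLike.GradedSMul.smul_mem r.2 m.2
      rw [gAux_of_mem ℳ 𝒩 hmem, gAux_of_mem ℳ 𝒩 m.2, map_smul, add_assoc,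
        projAux_smul 𝒜 𝒩 r.2]
    | add m m' h h' => rw [smul_add, map_add, h, h', map_add, smul_add]
  | add r r' h h' => rw [add_smul, map_add, h, h', add_smul]

/-- The degree-`s` homogeneous component of a linear map. -/
noncomputable def gHom (𝒜 : ℤ → AddSubgroup R) [GradedRing 𝒜] [SetLike.GradedSMul 𝒜 ℳ]
    [SetLike.GradedSMul 𝒜 𝒩] (f : M →ₗ[R] N) (s : ℤ) : M →ₗ[R] N :=
  { gAux ℳ 𝒩 f s with map_smul' := fun r m => gAux_smul (𝒜 := 𝒜) ℳ 𝒩 f s r m }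

lemma gHom_apply_eq (𝒜 : ℤ → AddSubgroup R) [GradedRing 𝒜] [SetLike.GradedSMul 𝒜 ℳ]
    [SetLike.GradedSMul 𝒜 𝒩] (f : M →ₗ[R] N) (s : ℤ) (m : M) :
    gHom ℳ 𝒩 𝒜 f s m = gAux ℳ 𝒩 f s m := rfl

/-- The finite set of degrees relevant for `f` at `m`. -/
noncomputable def suppSet (f : M →ₗ[R] N) (m : M) : Finset ℤ :=
  (DirectSum.decompose ℳ m).support.biUnion fun i =>
    (DirectSum.decompose 𝒩 (f (DirectSum.decompose ℳ m i : M))).support.image (· - i)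

lemma gAux_eq_zero_of_not_mem (f : M →ₗ[R] N) (m : M) {s : ℤ} (hs : s ∉ suppSet ℳ 𝒩 f m) :
    gAux ℳ 𝒩 f s m = 0 := by
  rw [gAux_apply]
  refine Finset.sum_eq_zero fun i hi => ?_
  by_contra hne
  refine hs (Finset.mem_biUnion.2 ⟨i, hi, Finset.mem_image.2 ⟨i + s, ?_, by ring⟩⟩)
  rw [DFinsupp.mem_support_iff]
  intro h0
  exact hne (by rw [projAux_apply, h0, ZeroMemClass.coe_zero])

lemma sum_suppSet_gAux (f : M →ₗ[R] N) (m : M) :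
    ∑ s ∈ suppSet ℳ 𝒩 f m, gAux ℳ 𝒩 f s m = f m := by
  simp only [gAux_apply]
  rw [Finset.sum_comm]
  have : ∀ i ∈ (DirectSum.decompose ℳ m).support,
      ∑ s ∈ suppSet ℳ 𝒩 f m, projAux 𝒩 (i + s) (f (DirectSum.decompose ℳ m i : M))
        = f (DirectSum.decompose ℳ m i : M) := by
    intro i hi
    set n := f (DirectSum.decompose ℳ m i : M) with hn
    have hsub : (DirectSum.decompose 𝒩 n).support.image (· - i) ⊆ suppSet ℳ 𝒩 f m :=
      fun s hs => Finset.mem_biUnion.2 ⟨i, hi, hs⟩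
    rw [← Finset.sum_subset hsub ?_]
    · rw [Finset.sum_image (by intro a _ b _ h; have h' : a - i = b - i := h; omega)]
      have := DirectSum.sum_support_decompose 𝒩 n
      calc ∑ j ∈ (DirectSum.decompose 𝒩 n).support, projAux 𝒩 (i + (j - i)) n
          = ∑ j ∈ (DirectSum.decompose 𝒩 n).support, (DirectSum.decompose 𝒩 n j : N) := by
            refine Finset.sum_congr rfl fun j _ => ?_
            rw [show i + (j - i) = j by ring, projAux_apply]
        _ = n := DirectSum.sum_support_decompose 𝒩 n
    · intro s hsT hsI
      have : i + s ∉ (DirectSum.decompose 𝒩 n).support := by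
        intro hmem
        exact hsI (Finset.mem_image.2 ⟨i + s, hmem, by ring⟩)
      rw [DFinsupp.notMem_support_iff] at this
      rw [projAux_apply, this, ZeroMemClass.coe_zero]
  rw [Finset.sum_congr rfl this, ← map_sum, DirectSum.sum_support_decompose ℳ m]

end aux2

/-- Over a `ℤ`-graded ring, every `R`-linear map from a finitely generated graded
module `M` to a graded module `N` is a finite sum of homogeneous maps. -/
theorem linearMap_eq_finite_sum_of_homogeneous
    (R : Type*) [Ring R] (𝒜 : ℤ → AddSubgroup R) [GradedRing 𝒜]
    (M N : Type*)
    [AddCommGroup M] [Module R M] [AddCommGroup N] [Module R N]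
    (ℳ : ℤ → AddSubgroup M) [SetLike.GradedSMul 𝒜 ℳ] [DirectSum.Decomposition ℳ]
    (𝒩 : ℤ → AddSubgroup N) [SetLike.GradedSMul 𝒜 𝒩] [DirectSum.Decomposition 𝒩]
    (hM : Module.Finite R M)
    (f : M →ₗ[R] N) :
    ∃ (S : Finset ℤ) (g : ℤ → (M →ₗ[R] N)),
      (∀ s ∈ S, ∀ i : ℤ, ∀ m ∈ ℳ i, g s m ∈ 𝒩 (i + s)) ∧
      f = ∑ s ∈ S, g s := by
  obtain ⟨G, hG⟩ := hM.fg_top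
  refine ⟨G.biUnion (fun x => suppSet ℳ 𝒩 f x), fun s => gHom ℳ 𝒩 𝒜 f s, ?_, ?_⟩
  · intro s _ i m hm
    rw [gHom_apply_eq, gAux_of_mem ℳ 𝒩 hm]
    exact projAux_mem 𝒩 _ _
  · apply LinearMap.ext_on hG
    intro x hx
    rw [LinearMap.sum_apply]
    simp only [gHom_apply_eq]
    have hsub : suppSet ℳ 𝒩 f x ⊆ G.biUnion (fun x => suppSet ℳ 𝒩 f x) :=
      Finset.subset_biUnion_of_mem _ hx
    rw [← Finset.sum_subset hsub (fun s _ hs => gAux_eq_zero_of_not_mem ℳ 𝒩 f x hs)]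
    exact (sum_suppSet_gAux ℳ 𝒩 f x).symm
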